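/- (Gluing lemma: failure of uniform bounds yields a single unbounded weight) Suppose that for every integer k ≥ 1 there exist a matrix weight W_k on I₀ and a nonzero f_k ∈ L²_{W_k}(ℝ^d), supported on I₀, such that ‖M^c_{W_k} f_k‖²_{L²} > 4^k ‖f_k‖²_{L²_{W_k}}. Then there exist a matrix weight W̃ on I₀ and a function f̃ ∈ L²_{W̃}(ℝ^d) with ‖f̃‖_{L²_{W̃}} = 1 such that ‖M^c_{W̃} f̃‖_{L²} = ∞. -/

import Mathlib

open MeasureTheory Set
open scoped ENNReal Matrix Pointwise Classical

noncomputable section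

/-- The unit interval `I₀ = [0,1)`. -/
def I0 : Set ℝ := Set.Ico (0 : ℝ) 1

/-- The dyadic interval `[k/2^n, (k+1)/2^n)`. -/
def dyad (n k : ℕ) : Set ℝ := Set.Ico ((k : ℝ) / 2 ^ n) (((k : ℝ) + 1) / 2 ^ n)

/-- Real `d × d` matrices. -/
abbrev Mat (d : ℕ) := Matrix (Fin d) (Fin d) ℝ

/-- The Euclidean norm `|v|_{ℝ^d}`. -/
def enorm2 {d : ℕ} (v : Fin d → ℝ) : ℝ := Real.sqrt (∑ i, v i ^ 2)

/-- The Euclidean inner product `⟨v, w⟩_{ℝ^d}`. -/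
def dotp {d : ℕ} (v w : Fin d → ℝ) : ℝ := ∑ i, v i * w i

open scoped Classical in
/-- The positive semidefinite square root of a positive semidefinite matrix
(junk value `0` if the matrix is not positive semidefinite). -/
def matSqrt {d : ℕ} (A : Mat d) : Mat d := if h : A.PosSemidef then
  h.1.eigenvectorUnitary.1 * Matrix.diagonal ((↑) ∘ (Real.sqrt ·) ∘ h.1.eigenvalues) *
    (star h.1.eigenvectorUnitary : Mat d) else 0

/-- Order in the sense of quadratic forms: `A ⩽ B` iff `B - A` is positive semidefinite. -/
def matLE {d : ℕ} (A B : Mat d) : Prop := (B - A).PosSemidef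

/-- The average `⟨g⟩_I = |I|⁻¹ ∫_I g` of a (scalar- or vector-valued) function. -/
def avgOn {E : Type*} [NormedAddCommGroup E] [NormedSpace ℝ E] (I : Set ℝ) (g : ℝ → E) : E :=
  (volume I).toReal⁻¹ • ∫ x in I, g x

/-- The entrywise average `⟨W⟩_I` of a matrix-valued function. -/
def avgMat {d : ℕ} (I : Set ℝ) (W : ℝ → Mat d) : Mat d :=
  Matrix.of fun i j => avgOn I fun x => W x i j

/-- A matrix weight on `I₀`: an integrable function with symmetric values,
positive definite a.e. on `I₀`. -/
structure IsMatrixWeight (d : ℕ) (W : ℝ → Mat d) : Prop where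
  intOn : ∀ i j, IntegrableOn (fun x => W x i j) I0
  symm : ∀ x, (W x).IsSymm
  posdef : ∀ᵐ x ∂(volume.restrict I0), (W x).PosDef

/-- Membership in `L²_W(ℝ^d)`. -/
def MemL2W {d : ℕ} (W : ℝ → Mat d) (f : ℝ → Fin d → ℝ) : Prop :=
  Measurable f ∧ IntegrableOn (fun x => dotp (W x *ᵥ f x) (f x)) I0

/-- The squared norm `‖f‖²_{L²_W} = ∫_{I₀} ⟨W(x) f(x), f(x)⟩ dx`. -/
def l2normSq {d : ℕ} (W : ℝ → Mat d) (f : ℝ → Fin d → ℝ) : ℝ :=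
  ∫ x in I0, dotp (W x *ᵥ f x) (f x)

/-- The average `⟨φ W f⟩_I = |I|⁻¹ ∫_I φ(y) W(y) f(y) dy`. -/
def avgPhiWf {d : ℕ} (I : Set ℝ) (φ : ℝ → ℝ) (W : ℝ → Mat d) (f : ℝ → Fin d → ℝ) :
    Fin d → ℝ :=
  avgOn I fun y => φ y • (W y *ᵥ f y)

/-- Admissible functions `φ : I → [-1,1]`, measurable. -/
def Adm (I : Set ℝ) (φ : ℝ → ℝ) : Prop :=
  Measurable φ ∧ ∀ y ∈ I, φ y ∈ Set.Icc (-1 : ℝ) 1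

/-- The matrix-weighted dyadic convex body maximal function `M^c_W f`,
valued in `ℝ≥0∞`. -/
def McW {d : ℕ} (W : ℝ → Mat d) (f : ℝ → Fin d → ℝ) (x : ℝ) : ℝ≥0∞ :=
  ⨆ (n : ℕ) (k : ℕ) (_ : k < 2 ^ n ∧ x ∈ dyad n k) (φ : ℝ → ℝ) (_ : Adm (dyad n k) φ),
    ENNReal.ofReal
      (enorm2 (matSqrt (W x) *ᵥ ((avgMat (dyad n k) W)⁻¹ *ᵥ avgPhiWf (dyad n k) φ W f)))

namespace GluingAux

lemma measurableSet_dyad (n j : ℕ) : MeasurableSet (dyad n j) := measurableSet_Ico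
lemma measurableSet_I0 : MeasurableSet I0 := measurableSet_Ico

lemma dyad_zero : dyad 0 0 = I0 := by simp [dyad, I0]

lemma volume_dyad (n j : ℕ) : volume (dyad n j) = ENNReal.ofReal ((2 ^ n : ℝ)⁻¹) := by
  rw [dyad, Real.volume_Ico]
  congr 1
  field_simp
  ring

def Tmap (e : ℕ) : ℝ → ℝ := fun y => 2 ^ e * y - 1

lemma Tmap_measurable (e : ℕ) : Measurable (Tmap e) := by unfold Tmap; fun_prop

lemma Tmap_preimage_dyad (e n j : ℕ) :
    Tmap e ⁻¹' dyad n j = dyad (n + e) (j + 2 ^ n) := by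
  ext y
  have h1 : (0:ℝ) < 2 ^ n := by positivity
  have h3 : (0:ℝ) < 2 ^ (n+e) := by positivity
  simp only [Tmap, dyad, mem_preimage, mem_Ico]
  rw [div_le_iff₀ h1, lt_div_iff₀ h1, div_le_iff₀ h3, lt_div_iff₀ h3]
  push_cast
  rw [pow_add]
  constructor <;> rintro ⟨u, v⟩ <;> constructor <;> nlinarith

lemma Tmap_preimage_I0 (e : ℕ) : Tmap e ⁻¹' I0 = dyad e 1 := by
  rw [← dyad_zero, Tmap_preimage_dyad]; norm_num

lemma Tmap_measurableEmbedding (e : ℕ) : MeasurableEmbedding (Tmap e) := by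
  have h : (2:ℝ)^e ≠ 0 := by positivity
  have hc : Tmap e = (fun x : ℝ => x - 1) ∘ (fun y : ℝ => (2:ℝ)^e * y) := rfl
  rw [hc]
  exact (Homeomorph.subRight (1:ℝ)).measurableEmbedding.comp
    (Homeomorph.mulLeft₀ ((2:ℝ)^e) h).measurableEmbedding

lemma Tmap_map_volume (e : ℕ) :
    Measure.map (Tmap e) volume = ENNReal.ofReal ((2^e:ℝ)⁻¹) • volume := by
  have h : (2:ℝ)^e ≠ 0 := by positivity
  have hc : Tmap e = (fun x : ℝ => x + (-1)) ∘ (fun y : ℝ => (2:ℝ)^e * y) := by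
    funext y; simp [Tmap]; ring
  rw [hc, ← Measure.map_map (by fun_prop) (by fun_prop)]
  rw [show (fun y : ℝ => (2:ℝ)^e * y) = ((2:ℝ)^e * ·) from rfl, Real.map_volume_mul_left h]
  rw [Measure.map_smul, show (fun x:ℝ => x + (-1:ℝ)) = (· + (-1:ℝ)) from rfl,
    map_add_right_eq_self volume (-1:ℝ)]
  congr 2
  rw [abs_of_pos (by positivity)]

lemma Tmap_map_restrict (e : ℕ) {s : Set ℝ} (hs : MeasurableSet s) :
    Measure.map (Tmap e) (volume.restrict (Tmap e ⁻¹' s)) =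
      ENNReal.ofReal ((2^e:ℝ)⁻¹) • volume.restrict s := by
  rw [← Measure.restrict_map (Tmap_measurable e) hs, Tmap_map_volume, Measure.restrict_smul]

lemma lintegral_Tmap (e : ℕ) {s : Set ℝ} (hs : MeasurableSet s) (g : ℝ → ℝ≥0∞) :
    ∫⁻ y in Tmap e ⁻¹' s, g (Tmap e y) =
      ENNReal.ofReal ((2^e:ℝ)⁻¹) * ∫⁻ x in s, g x := by
  rw [← (Tmap_measurableEmbedding e).lintegral_map, Tmap_map_restrict e hs,
    lintegral_smul_measure, smul_eq_mul]

lemma integral_Tmap {E : Type*} [NormedAddCommGroup E] [NormedSpace ℝ E]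
    (e : ℕ) {s : Set ℝ} (hs : MeasurableSet s) (g : ℝ → E) :
    ∫ y in Tmap e ⁻¹' s, g (Tmap e y) = ((2^e:ℝ)⁻¹) • ∫ x in s, g x := by
  rw [← (Tmap_measurableEmbedding e).integral_map, Tmap_map_restrict e hs,
    integral_smul_measure, ENNReal.toReal_ofReal (by positivity)]

lemma aemeasurable_Tmap {β : Type*} [MeasurableSpace β] (e : ℕ) {s : Set ℝ}
    (hs : MeasurableSet s) {g : ℝ → β} (hg : AEMeasurable g (volume.restrict s)) :
    AEMeasurable (fun y => g (Tmap e y)) (volume.restrict (Tmap e ⁻¹' s)) := by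
  have h1 : AEMeasurable g (Measure.map (Tmap e) (volume.restrict (Tmap e ⁻¹' s))) := by
    rw [Tmap_map_restrict e hs]; exact hg.smul_measure _
  exact h1.comp_aemeasurable (Tmap_measurable e).aemeasurable

lemma ae_Tmap (e : ℕ) {s : Set ℝ} (hs : MeasurableSet s) {p : ℝ → Prop}
    (hp : ∀ᵐ x ∂volume.restrict s, p x) :
    ∀ᵐ y ∂volume.restrict (Tmap e ⁻¹' s), p (Tmap e y) := by
  rw [← (Tmap_measurableEmbedding e).ae_map_iff, Tmap_map_restrict e hs]
  exact Measure.ae_smul_measure hp _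

lemma avgOn_congr {E : Type*} [NormedAddCommGroup E] [NormedSpace ℝ E] {I : Set ℝ}
    (hI : MeasurableSet I) {g g' : ℝ → E} (h : ∀ x ∈ I, g x = g' x) :
    avgOn I g = avgOn I g' := by
  unfold avgOn
  rw [setIntegral_congr_fun hI h]

lemma avgOn_smul {E : Type*} [NormedAddCommGroup E] [NormedSpace ℝ E] (I : Set ℝ)
    (a : ℝ) (g : ℝ → E) : avgOn I (fun x => a • g x) = a • avgOn I g := by
  unfold avgOn
  rw [integral_smul, smul_comm]

lemma avgOn_Tmap {E : Type*} [NormedAddCommGroup E] [NormedSpace ℝ E]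
    (e n j : ℕ) (g : ℝ → E) :
    avgOn (Tmap e ⁻¹' dyad n j) (fun y => g (Tmap e y)) = avgOn (dyad n j) g := by
  unfold avgOn
  rw [integral_Tmap e (measurableSet_dyad n j), Tmap_preimage_dyad, volume_dyad, volume_dyad,
    ENNReal.toReal_ofReal (by positivity), ENNReal.toReal_ofReal (by positivity),
    smul_smul, inv_inv, inv_inv, pow_add]
  congr 1
  field_simp

lemma enorm2_smul {d : ℕ} {a : ℝ} (ha : 0 ≤ a) (v : Fin d → ℝ) :
    enorm2 (a • v) = a * enorm2 v := by
  unfold enorm2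
  have hs : ∑ i, (a • v) i ^ 2 = a ^ 2 * ∑ i, v i ^ 2 := by
    rw [Finset.mul_sum]
    refine Finset.sum_congr rfl fun i _ => ?_
    simp [smul_eq_mul]
    ring
  rw [hs, Real.sqrt_mul (by positivity), Real.sqrt_sq ha]

lemma dotp_mulVec_smul {d : ℕ} (W : Mat d) (a : ℝ) (v : Fin d → ℝ) :
    dotp (W *ᵥ (a • v)) (a • v) = a ^ 2 * dotp (W *ᵥ v) v := by
  unfold dotp
  rw [Matrix.mulVec_smul, Finset.mul_sum]
  refine Finset.sum_congr rfl fun i _ => ?_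
  simp [smul_eq_mul]
  ring

lemma dotp_nonneg_of_posSemidef {d : ℕ} {W : Mat d} (hW : W.PosSemidef) (v : Fin d → ℝ) :
    0 ≤ dotp (W *ᵥ v) v := by
  have := hW.dotProduct_mulVec_nonneg v
  rwa [star_trivial, dotProduct_comm] at this

lemma mem_dyad_one_unique {a b : ℕ} {y : ℝ} (hy : y ∈ dyad a 1) (hy' : y ∈ dyad b 1) :
    a = b := by
  by_contra hne
  rcases Nat.lt_or_ge a b with hab | hba
  · have h1 : (2:ℝ)^(a+1) ≤ 2^b := pow_le_pow_right₀ (by norm_num) hab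
    have h2 := hy.1; have h3 := hy'.2
    have hy0 : 0 < y := lt_of_lt_of_le (by positivity) hy.1
    rw [div_le_iff₀ (by positivity)] at h2
    rw [lt_div_iff₀ (by positivity)] at h3
    push_cast at h2 h3
    nlinarith [mul_le_mul_of_nonneg_left h1 (le_of_lt hy0),
      (show (2:ℝ)^(a+1) = 2^a*2 by ring)]
  · rcases Nat.lt_or_ge b a with hba' | h
    · have h1 : (2:ℝ)^(b+1) ≤ 2^a := pow_le_pow_right₀ (by norm_num) hba'
      have h2 := hy'.1; have h3 := hy.2
      have hy0 : 0 < y := lt_of_lt_of_le (by positivity) hy'.1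
      rw [div_le_iff₀ (by positivity)] at h2
      rw [lt_div_iff₀ (by positivity)] at h3
      push_cast at h2 h3
      nlinarith [mul_le_mul_of_nonneg_left h1 (le_of_lt hy0),
        (show (2:ℝ)^(b+1) = 2^b*2 by ring)]
    · omega

lemma dyad_one_subset_I0 {e : ℕ} (he : 1 ≤ e) : dyad e 1 ⊆ I0 := by
  intro y hy
  simp only [dyad, mem_Ico] at hy
  have h1 : (0:ℝ) < 2^e := by positivity
  have h2 : (2:ℝ)^1 ≤ 2^e := pow_le_pow_right₀ (by norm_num) he
  constructor
  · have := hy.1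
    have : (0:ℝ) < 1 / 2^e := by positivity
    nlinarith [hy.1]
  · have h3 := hy.2
    rw [lt_div_iff₀ h1] at h3
    push_cast at h3
    norm_num at h2
    by_contra hc
    push_neg at hc
    nlinarith [mul_le_mul_of_nonneg_right hc (le_of_lt h1)]

lemma le_McW {d : ℕ} (W : ℝ → Mat d) (f : ℝ → Fin d → ℝ) (x : ℝ) (n j : ℕ)
    (hcond : j < 2 ^ n ∧ x ∈ dyad n j) (φ : ℝ → ℝ) (hφ : Adm (dyad n j) φ) :
    ENNReal.ofReal
      (enorm2 (matSqrt (W x) *ᵥ ((avgMat (dyad n j) W)⁻¹ *ᵥ avgPhiWf (dyad n j) φ W f)))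
      ≤ McW W f x := by
  unfold McW
  exact le_iSup_of_le n (le_iSup_of_le j (le_iSup_of_le hcond (le_iSup_of_le φ
    (le_iSup_of_le hφ le_rfl))))

lemma ofReal_inv_two_pow (m : ℕ) :
    ENNReal.ofReal ((2 ^ m : ℝ)⁻¹) = ((2 : ℝ≥0∞) ^ m)⁻¹ := by
  rw [ENNReal.ofReal_inv_of_pos (by positivity), ENNReal.ofReal_pow (by norm_num)]
  norm_num

lemma dyad_subset_I0 {n j : ℕ} (hj : j < 2 ^ n) : dyad n j ⊆ I0 := by
  intro y hy
  simp only [dyad, mem_Ico] at hy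
  have h1 : (0:ℝ) < 2 ^ n := by positivity
  constructor
  · exact le_trans (by positivity) hy.1
  · have h2 := hy.2
    rw [lt_div_iff₀ h1] at h2
    have h3 : (j:ℝ) + 1 ≤ 2 ^ n := by exact_mod_cast Nat.succ_le_of_lt hj
    nlinarith

lemma pow_bound {sk ek K : ℕ} (h : sk + K ≤ ek) :
    ((2 : ℝ≥0∞) ^ ek)⁻¹ * 2 ^ sk ≤ ((2 : ℝ≥0∞) ^ K)⁻¹ := by
  have h0 : ((2:ℝ≥0∞) ^ sk) ≠ 0 := by positivity
  have ht : ((2:ℝ≥0∞) ^ sk) ≠ ⊤ := ENNReal.pow_ne_top (by norm_num)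
  calc ((2:ℝ≥0∞) ^ ek)⁻¹ * 2 ^ sk ≤ ((2:ℝ≥0∞) ^ (K + sk))⁻¹ * 2 ^ sk := by
        gcongr
        · exact one_le_two
        · omega
    _ = ((2:ℝ≥0∞) ^ K)⁻¹ * (((2:ℝ≥0∞) ^ sk)⁻¹ * 2 ^ sk) := by
        rw [pow_add, ENNReal.mul_inv (Or.inl (by positivity)) (Or.inr (by positivity)),
          mul_assoc]
    _ = ((2:ℝ≥0∞) ^ K)⁻¹ := by rw [ENNReal.inv_mul_cancel h0 ht, mul_one]

lemma tsum_halves_ennreal : ∑' k : ℕ, ((2 : ℝ≥0∞) ^ (k + 1))⁻¹ = 1 := by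
  have h : ∀ k : ℕ, ((2 : ℝ≥0∞) ^ (k + 1))⁻¹ = 2⁻¹ * (2⁻¹) ^ k := by
    intro k
    rw [← ENNReal.inv_pow, pow_succ, mul_comm, ENNReal.mul_inv (Or.inl (by positivity))
      (Or.inl (by norm_num)), ENNReal.inv_pow]
  rw [tsum_congr h, ENNReal.tsum_mul_left, ENNReal.tsum_geometric]
  rw [ENNReal.one_sub_inv_two, inv_inv, ENNReal.inv_mul_cancel (by norm_num) (by norm_num)]

lemma tsum_halves_real : ∑' k : ℕ, ((2 : ℝ) ^ (k + 1))⁻¹ = 1 := by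
  have h : ∀ k : ℕ, ((2 : ℝ) ^ (k + 1))⁻¹ = 1 / 2 / 2 ^ k := by
    intro k
    rw [pow_succ]
    field_simp
  rw [tsum_congr h, tsum_geometric_two' 1]
end GluingAux
open GluingAux

set_option maxHeartbeats 1000000

/-- **Gluing lemma: failure of uniform bounds yields a single unbounded weight.**
If for every `k ≥ 1` there are a matrix weight `W_k` on `I₀` and a nonzero
`f_k ∈ L²_{W_k}(ℝ^d)` supported on `I₀` with `‖M^c_{W_k} f_k‖²_{L²} > 4^k ‖f_k‖²_{L²_{W_k}}`,
then there are a matrix weight `W̃` on `I₀` and `f̃ ∈ L²_{W̃}(ℝ^d)` with `‖f̃‖_{L²_{W̃}} = 1`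
and `‖M^c_{W̃} f̃‖_{L²} = ∞`. -/
theorem gluing_unbounded_weight {d : ℕ}
    (h : ∀ k : ℕ, 1 ≤ k →
      ∃ (W : ℝ → Mat d) (f : ℝ → Fin d → ℝ),
        IsMatrixWeight d W ∧ MemL2W W f ∧ (∀ x, x ∉ I0 → f x = 0) ∧
        0 < l2normSq W f ∧
        ENNReal.ofReal ((4 : ℝ) ^ k * l2normSq W f) < ∫⁻ x in I0, (McW W f x) ^ 2) :
    ∃ (Wt : ℝ → Mat d) (ft : ℝ → Fin d → ℝ),
      IsMatrixWeight d Wt ∧ MemL2W Wt ft ∧ l2normSq Wt ft = 1 ∧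
      (∫⁻ x in I0, (McW Wt ft x) ^ 2) = ⊤ := by
  classical
  choose W f hW hMem hsupp hpos hbig using fun k : ℕ => h (k + 1) (Nat.le_add_left 1 k)
  -- choose exponents controlling the total mass of the weights
  have hs : ∀ k : ℕ, ∃ m : ℕ,
      (∑ i : Fin d, ∑ j : Fin d, ∫⁻ x in I0, (‖W k x i j‖₊ : ℝ≥0∞)) ≤ 2 ^ m := by
    intro k
    have hfin : (∑ i : Fin d, ∑ j : Fin d, ∫⁻ x in I0, (‖W k x i j‖₊ : ℝ≥0∞)) ≠ ⊤ := by
      refine (ENNReal.sum_lt_top.2 fun i _ => ENNReal.sum_lt_top.2 fun j _ => ?_).ne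
      exact ((hW k).intOn i j).2
    obtain ⟨n, hn⟩ := ENNReal.exists_nat_gt hfin
    refine ⟨n, hn.le.trans ?_⟩
    calc (n : ℝ≥0∞) ≤ ((2 ^ n : ℕ) : ℝ≥0∞) := by
          exact_mod_cast (Nat.lt_two_pow_self (n := n)).le
      _ = 2 ^ n := by push_cast; ring
  choose s hsle using hs
  set e : ℕ → ℕ := fun k => (k + 1) + Finset.sup (Finset.range (k + 1)) s with he_def
  have hemono : StrictMono e := by
    apply strictMono_nat_of_lt_succ
    intro k
    have : Finset.sup (Finset.range (k + 1)) s ≤ Finset.sup (Finset.range (k + 1 + 1)) s :=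
      Finset.sup_mono (Finset.range_subset_range.2 (by omega))
    simp only [he_def]
    omega
  have he1 : ∀ k, 1 ≤ e k := fun k => by simp only [he_def]; omega
  have heS : ∀ k, s k + (k + 1) ≤ e k := by
    intro k
    have : s k ≤ Finset.sup (Finset.range (k + 1)) s :=
      Finset.le_sup (Finset.self_mem_range_succ k)
    simp only [he_def]; omega
  set J : ℕ → Set ℝ := fun k => dyad (e k) 1 with hJ_def
  have hJmeas : ∀ k, MeasurableSet (J k) := fun k => measurableSet_dyad _ _
  have hJI0 : ∀ k, J k ⊆ I0 := fun k => dyad_one_subset_I0 (he1 k)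
  have hJpre : ∀ k, Tmap (e k) ⁻¹' I0 = J k := fun k => Tmap_preimage_I0 (e k)
  have hJu : ∀ {i j : ℕ} {y : ℝ}, y ∈ J i → y ∈ J j → i = j := fun hi hj =>
    hemono.injective (mem_dyad_one_unique hi hj)
  set U : Set ℝ := ⋃ k, J k with hU_def
  have hUmeas : MeasurableSet U := MeasurableSet.iUnion hJmeas
  have hUI0 : U ⊆ I0 := iUnion_subset hJI0
  set N : ℕ → ℝ := fun k => l2normSq (W k) (f k) with hN_def
  have hN : ∀ k, 0 < N k := hpos
  set a : ℕ → ℝ := fun k => Real.sqrt (2 ^ e k * ((2 : ℝ) ^ (k + 1))⁻¹ / N k) with ha_def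
  have ha0 : ∀ k, 0 ≤ a k := fun k => Real.sqrt_nonneg _
  have hasq : ∀ k, a k ^ 2 = 2 ^ e k * ((2 : ℝ) ^ (k + 1))⁻¹ / N k := by
    intro k
    have := hN k
    rw [ha_def, Real.sq_sqrt (by positivity)]
  -- glued weight and function
  have hp : ∀ y : ℝ, ∃ k, y ∈ J k ∨ y ∉ U := by
    intro y
    by_cases hy : y ∈ U
    · obtain ⟨k, hk⟩ := mem_iUnion.1 hy
      exact ⟨k, Or.inl hk⟩
    · exact ⟨0, Or.inr hy⟩
  set GW : ℕ → ℝ → Mat d := fun k y => if y ∈ J k then W k (Tmap (e k) y) else 1 with hGW_def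
  set GF : ℕ → ℝ → (Fin d → ℝ) :=
    fun k y => if y ∈ J k then a k • f k (Tmap (e k) y) else 0 with hGF_def
  set Wt : ℝ → Mat d := fun y => GW (Nat.find (hp y)) y with hWt_def
  set ft : ℝ → Fin d → ℝ := fun y => GF (Nat.find (hp y)) y with hft_def
  have hfind : ∀ k (y : ℝ), y ∈ J k → Nat.find (hp y) = k := by
    intro k y hy
    rw [Nat.find_eq_iff]
    refine ⟨Or.inl hy, fun m hm => ?_⟩
    rintro (hmem | hnot)
    · exact absurd (hJu hmem hy) (Nat.ne_of_lt hm)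
    · exact hnot (mem_iUnion.2 ⟨k, hy⟩)
  have hWtJ : ∀ k (y : ℝ), y ∈ J k → Wt y = W k (Tmap (e k) y) := by
    intro k y hy
    simp only [hWt_def, hfind k y hy, hGW_def, if_pos hy]
  have hftJ : ∀ k (y : ℝ), y ∈ J k → ft y = a k • f k (Tmap (e k) y) := by
    intro k y hy
    simp only [hft_def, hfind k y hy, hGF_def, if_pos hy]
  have hWtU : ∀ y : ℝ, y ∉ U → Wt y = 1 := by
    intro y hy
    have : y ∉ J (Nat.find (hp y)) := fun hmem => hy (mem_iUnion.2 ⟨_, hmem⟩)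
    simp only [hWt_def, hGW_def, if_neg this]
  have hftU : ∀ y : ℝ, y ∉ U → ft y = 0 := by
    intro y hy
    have : y ∉ J (Nat.find (hp y)) := fun hmem => hy (mem_iUnion.2 ⟨_, hmem⟩)
    simp only [hft_def, hGF_def, if_neg this]
  have hJdisj : Pairwise (Function.onFun Disjoint J) := by
    intro i j hij
    exact Set.disjoint_left.mpr fun y hyi hyj => hij (hJu hyi hyj)
  -- measure decomposition
  have hdec : volume.restrict I0 =
      volume.restrict (I0 \ U) + Measure.sum (fun k => volume.restrict (J k)) := by
    rw [← Measure.restrict_iUnion hJdisj hJmeas, ← Measure.restrict_union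
      disjoint_sdiff_left hUmeas, diff_union_of_subset hUI0]
  -- block transfer helpers
  have hblockL : ∀ (k : ℕ) (g : ℝ → ℝ≥0∞),
      ∫⁻ y in J k, g (Tmap (e k) y) = ENNReal.ofReal ((2 ^ e k : ℝ)⁻¹) * ∫⁻ x in I0, g x := by
    intro k g
    rw [← hJpre k]
    exact lintegral_Tmap _ measurableSet_I0 g
  have hblockI : ∀ (k : ℕ) (g : ℝ → ℝ),
      ∫ y in J k, g (Tmap (e k) y) = ((2 ^ e k : ℝ)⁻¹) • ∫ x in I0, g x := by
    intro k g
    rw [← hJpre k]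
    exact integral_Tmap _ measurableSet_I0 g
  have hblockAEM : ∀ (k : ℕ) (g : ℝ → ℝ), AEMeasurable g (volume.restrict I0) →
      AEMeasurable (fun y => g (Tmap (e k) y)) (volume.restrict (J k)) := by
    intro k g hg
    rw [← hJpre k]
    exact aemeasurable_Tmap _ measurableSet_I0 hg
  have hblockAE : ∀ (k : ℕ) (p : ℝ → Prop), (∀ᵐ x ∂volume.restrict I0, p x) →
      (∀ᵐ y ∂volume.restrict (J k), p (Tmap (e k) y)) := by
    intro k p hpae
    rw [← hJpre k]
    exact ae_Tmap _ measurableSet_I0 hpae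
  -- the quadratic forms
  set qk : ℕ → ℝ → ℝ := fun k x => dotp (W k x *ᵥ f k x) (f k x) with hqk_def
  set qt : ℝ → ℝ := fun x => dotp (Wt x *ᵥ ft x) (ft x) with hqt_def
  have hqJ : ∀ (k : ℕ) (y : ℝ), y ∈ J k → qt y = (a k) ^ 2 * qk k (Tmap (e k) y) := by
    intro k y hy
    simp only [hqt_def, hqk_def]
    rw [hWtJ k y hy, hftJ k y hy, dotp_mulVec_smul]
  have hqU : ∀ y : ℝ, y ∉ U → qt y = 0 := by
    intro y hy
    simp only [hqt_def]
    rw [hftU y hy]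
    simp [dotp]
  have hqkInt : ∀ k, IntegrableOn (qk k) I0 := fun k => (hMem k).2
  have hqknn : ∀ k, 0 ≤ᵐ[volume.restrict I0] qk k := by
    intro k
    filter_upwards [(hW k).posdef] with x hx
    exact dotp_nonneg_of_posSemidef hx.posSemidef _
  have hqklint : ∀ k, ∫⁻ x in I0, (‖qk k x‖₊ : ℝ≥0∞) = ENNReal.ofReal (N k) := by
    intro k
    have h1 := ofReal_integral_eq_lintegral_ofReal (hqkInt k) (hqknn k)
    have h2 : ∫⁻ x in I0, (‖qk k x‖₊ : ℝ≥0∞) = ∫⁻ x in I0, ENNReal.ofReal (qk k x) := by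
      refine lintegral_congr_ae ?_
      filter_upwards [hqknn k] with x hx
      exact Real.enorm_eq_ofReal hx
    rw [h2, ← h1]
    rfl
  -- measurability of the glued objects
  have hftMeas : Measurable ft := by
    rw [hft_def]
    refine Measurable.find (fun n => ?_) (fun n => ?_) hp
    · exact Measurable.ite (hJmeas n)
        ((((hMem n).1).comp (Tmap_measurable (e n))).const_smul (a n)) measurable_const
    · show MeasurableSet {x | x ∈ J n ∨ x ∉ U}
      have : {x : ℝ | x ∈ J n ∨ x ∉ U} = J n ∪ Uᶜ := rfl
      rw [this]
      exact (hJmeas n).union hUmeas.compl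
  have hqtAEM : AEMeasurable qt (volume.restrict I0) := by
    rw [hdec]
    refine (aemeasurable_add_measure_iff).2 ⟨?_, (aemeasurable_sum_measure_iff).2 fun k => ?_⟩
    · refine (aemeasurable_const (b := (0:ℝ))).congr ?_
      refine ((ae_restrict_iff' (measurableSet_I0.diff hUmeas)).2 (ae_of_all _ ?_))
      intro y hy
      exact (hqU y hy.2).symm
    · have base : AEMeasurable (qk k) (volume.restrict I0) := (hqkInt k).1.aemeasurable
      refine ((hblockAEM k _ base).const_mul ((a k) ^ 2)).congr ?_
      refine (ae_restrict_iff' (hJmeas k)).2 (ae_of_all _ fun y hy => ?_)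
      exact (hqJ k y hy).symm
  -- lintegral of qt over blocks
  have hqtblock : ∀ k : ℕ, ∫⁻ y in J k, (‖qt y‖₊ : ℝ≥0∞)
      = ENNReal.ofReal ((2 ^ (k + 1) : ℝ)⁻¹) := by
    intro k
    have h1 : ∫⁻ y in J k, (‖qt y‖₊ : ℝ≥0∞) =
        ∫⁻ y in J k, ENNReal.ofReal ((a k) ^ 2) * (‖qk k (Tmap (e k) y)‖₊ : ℝ≥0∞) := by
      refine setLIntegral_congr_fun (hJmeas k) (fun y hy => ?_)
      rw [hqJ k y hy, ← Real.enorm_eq_ofReal (by positivity), ← enorm_eq_nnnorm, ← enorm_eq_nnnorm, enorm_mul]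
    have base : AEMeasurable (qk k) (volume.restrict I0) := (hqkInt k).1.aemeasurable
    have h2 : AEMeasurable (fun y => (‖qk k (Tmap (e k) y)‖₊ : ℝ≥0∞)) (volume.restrict (J k)) :=
      (hblockAEM k _ base).enorm
    rw [h1, lintegral_const_mul'' _ h2, hblockL k (fun x => (‖qk k x‖₊ : ℝ≥0∞)), hqklint k,
      ← ENNReal.ofReal_mul (by positivity), ← ENNReal.ofReal_mul (by positivity)]
    congr 1
    rw [hasq k]
    have hNk := hN k
    have h2e : (0:ℝ) < 2 ^ e k := by positivity
    field_simp
  have hqtfin : HasFiniteIntegral qt (volume.restrict I0) := by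
    show (∫⁻ y, (‖qt y‖₊ : ℝ≥0∞) ∂volume.restrict I0) < ⊤
    rw [hdec, lintegral_add_measure, lintegral_sum_measure]
    have hz : ∫⁻ y, (‖qt y‖₊ : ℝ≥0∞) ∂volume.restrict (I0 \ U) = 0 := by
      have : ∀ᵐ y ∂volume.restrict (I0 \ U), (‖qt y‖₊ : ℝ≥0∞) = 0 := by
        refine (ae_restrict_iff' (measurableSet_I0.diff hUmeas)).2 (ae_of_all _ fun y hy => ?_)
        rw [hqU y hy.2]
        simp
      rw [lintegral_congr_ae this, lintegral_zero]
    rw [hz, zero_add]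
    have : ∑' k, ∫⁻ y, (‖qt y‖₊ : ℝ≥0∞) ∂volume.restrict (J k)
        = ∑' k : ℕ, ENNReal.ofReal ((2 ^ (k + 1) : ℝ)⁻¹) := tsum_congr hqtblock
    rw [this]
    have : ∑' k : ℕ, ENNReal.ofReal ((2 ^ (k + 1) : ℝ)⁻¹) = 1 := by
      have h1 : ∀ k : ℕ, ENNReal.ofReal ((2 ^ (k + 1) : ℝ)⁻¹) = ((2:ℝ≥0∞) ^ (k+1))⁻¹ :=
        fun k => ofReal_inv_two_pow (k+1)
      rw [tsum_congr h1, tsum_halves_ennreal]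
    rw [this]
    exact ENNReal.one_lt_top
  have hqtInt : IntegrableOn qt I0 := ⟨hqtAEM.aestronglyMeasurable, hqtfin⟩
  -- the glued weight is a matrix weight
  have hintOn : ∀ i j : Fin d, IntegrableOn (fun x => Wt x i j) I0 := by
    intro i j
    constructor
    · refine AEMeasurable.aestronglyMeasurable ?_
      rw [hdec]
      refine (aemeasurable_add_measure_iff).2 ⟨?_, (aemeasurable_sum_measure_iff).2 fun k => ?_⟩
      · refine (aemeasurable_const (b := ((1 : Mat d) i j))).congr ?_
        refine ((ae_restrict_iff' (measurableSet_I0.diff hUmeas)).2 (ae_of_all _ ?_))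
        intro y hy
        show (1 : Mat d) i j = Wt y i j
        rw [hWtU y hy.2]
      · have base : AEMeasurable (fun x => W k x i j) (volume.restrict I0) :=
          ((hW k).intOn i j).1.aemeasurable
        refine (hblockAEM k _ base).congr ?_
        refine (ae_restrict_iff' (hJmeas k)).2 (ae_of_all _ fun y hy => ?_)
        show W k (Tmap (e k) y) i j = Wt y i j
        rw [hWtJ k y hy]
    · show (∫⁻ y, (‖Wt y i j‖₊ : ℝ≥0∞) ∂volume.restrict I0) < ⊤
      rw [hdec, lintegral_add_measure, lintegral_sum_measure]
      have hz : ∫⁻ y, (‖Wt y i j‖₊ : ℝ≥0∞) ∂volume.restrict (I0 \ U)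
          ≤ (‖(1 : Mat d) i j‖₊ : ℝ≥0∞) * 1 := by
        have hcg : ∫⁻ y, (‖Wt y i j‖₊ : ℝ≥0∞) ∂volume.restrict (I0 \ U)
            = ∫⁻ _ , (‖(1 : Mat d) i j‖₊ : ℝ≥0∞) ∂volume.restrict (I0 \ U) := by
          refine lintegral_congr_ae ?_
          refine (ae_restrict_iff' (measurableSet_I0.diff hUmeas)).2 (ae_of_all _ fun y hy => ?_)
          show (‖Wt y i j‖₊ : ℝ≥0∞) = (‖(1 : Mat d) i j‖₊ : ℝ≥0∞)
          rw [hWtU y hy.2]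
        rw [hcg, lintegral_const, Measure.restrict_apply_univ]
        refine mul_le_mul_right ?_ _
        refine le_trans (measure_mono diff_subset) ?_
        rw [show I0 = Set.Ico (0:ℝ) 1 from rfl, Real.volume_Ico]
        simp
      have hblocks : ∀ k : ℕ, ∫⁻ y, (‖Wt y i j‖₊ : ℝ≥0∞) ∂volume.restrict (J k)
          ≤ ((2 : ℝ≥0∞) ^ (k + 1))⁻¹ := by
        intro k
        have hcg : ∫⁻ y, (‖Wt y i j‖₊ : ℝ≥0∞) ∂volume.restrict (J k)
            = ∫⁻ y in J k, (‖W k (Tmap (e k) y) i j‖₊ : ℝ≥0∞) := by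
          refine setLIntegral_congr_fun (hJmeas k) (fun y hy => ?_)
          show (‖Wt y i j‖₊ : ℝ≥0∞) = (‖W k (Tmap (e k) y) i j‖₊ : ℝ≥0∞)
          rw [hWtJ k y hy]
        rw [hcg, hblockL k (fun x => (‖W k x i j‖₊ : ℝ≥0∞)), ofReal_inv_two_pow]
        have hle1 : ∫⁻ x in I0, (‖W k x i j‖₊ : ℝ≥0∞)
            ≤ ∑ i' : Fin d, ∑ j' : Fin d, ∫⁻ x in I0, (‖W k x i' j'‖₊ : ℝ≥0∞) := by
          refine le_trans ?_ (Finset.single_le_sum (f := fun i' =>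
            ∑ j' : Fin d, ∫⁻ x in I0, (‖W k x i' j'‖₊ : ℝ≥0∞)) (fun _ _ => zero_le)
            (Finset.mem_univ i))
          exact Finset.single_le_sum (f := fun j' => ∫⁻ x in I0, (‖W k x i j'‖₊ : ℝ≥0∞))
            (fun _ _ => zero_le) (Finset.mem_univ j)
        calc ((2:ℝ≥0∞) ^ e k)⁻¹ * ∫⁻ x in I0, (‖W k x i j‖₊ : ℝ≥0∞)
            ≤ ((2:ℝ≥0∞) ^ e k)⁻¹ * 2 ^ s k := by
              exact mul_le_mul_right (le_trans hle1 (by exact_mod_cast hsle k)) _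
          _ ≤ ((2:ℝ≥0∞) ^ (k + 1))⁻¹ := pow_bound (heS k)
      calc _ ≤ (‖(1 : Mat d) i j‖₊ : ℝ≥0∞) * 1 + ∑' k : ℕ, ((2 : ℝ≥0∞) ^ (k + 1))⁻¹ :=
            add_le_add hz (ENNReal.tsum_le_tsum hblocks)
        _ < ⊤ := by
            rw [tsum_halves_ennreal]
            exact ENNReal.add_lt_top.2 ⟨by simp [ENNReal.mul_lt_top, ENNReal.coe_lt_top],
              ENNReal.one_lt_top⟩
  have hsymm : ∀ y : ℝ, (Wt y).IsSymm := by
    intro y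
    by_cases hyU : y ∈ U
    · obtain ⟨k, hk⟩ := mem_iUnion.1 hyU
      rw [hWtJ k y hk]
      exact (hW k).symm _
    · rw [hWtU y hyU]
      exact Matrix.isSymm_one
  have hposW : ∀ᵐ y ∂volume.restrict I0, (Wt y).PosDef := by
    rw [ae_restrict_iff' measurableSet_I0]
    have hk : ∀ k : ℕ, ∀ᵐ y : ℝ, y ∈ J k → (Wt y).PosDef := by
      intro k
      have h1 : ∀ᵐ y ∂volume.restrict (J k), (W k (Tmap (e k) y)).PosDef :=
        hblockAE k (fun x => (W k x).PosDef) (hW k).posdef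
      have h2 := (ae_restrict_iff' (hJmeas k)).1 h1
      filter_upwards [h2] with y hy hyJ
      rw [hWtJ k y hyJ]
      exact hy hyJ
    filter_upwards [ae_all_iff.2 hk] with y hy _
    by_cases hyU : y ∈ U
    · obtain ⟨k, hk'⟩ := mem_iUnion.1 hyU
      exact hy k hk'
    · rw [hWtU y hyU]
      exact Matrix.PosDef.one
  -- the L² norm is 1
  have hl2 : l2normSq Wt ft = 1 := by
    have hint2 : Integrable qt (volume.restrict (I0 \ U)) ∧
        Integrable qt (Measure.sum fun k => volume.restrict (J k)) := by
      rw [← integrable_add_measure, ← hdec]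
      exact hqtInt
    have hshow : l2normSq Wt ft = ∫ y, qt y ∂volume.restrict I0 := rfl
    rw [hshow, hdec, integral_add_measure hint2.1 hint2.2, integral_sum_measure hint2.2]
    have hz : ∫ y, qt y ∂volume.restrict (I0 \ U) = 0 := by
      refine integral_eq_zero_of_ae ?_
      refine (ae_restrict_iff' (measurableSet_I0.diff hUmeas)).2 (ae_of_all _ fun y hy => ?_)
      exact hqU y hy.2
    have hb : ∀ k : ℕ, ∫ y, qt y ∂volume.restrict (J k) = ((2 : ℝ) ^ (k + 1))⁻¹ := by
      intro k
      have hcg : ∫ y, qt y ∂volume.restrict (J k)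
          = ∫ y in J k, (a k) ^ 2 * qk k (Tmap (e k) y) :=
        setIntegral_congr_fun (hJmeas k) fun y hy => hqJ k y hy
      rw [hcg, integral_const_mul, hblockI k (qk k), smul_eq_mul]
      have hNN : ∫ x in I0, qk k x = N k := rfl
      rw [hNN, hasq k]
      have hNk := hN k
      have h2e : (0:ℝ) < 2 ^ e k := by positivity
      field_simp
    rw [hz, zero_add, tsum_congr hb, tsum_halves_real]
  -- pointwise comparison of maximal functions on each block
  have hMcomp : ∀ (k : ℕ) (y : ℝ), y ∈ J k →
      ENNReal.ofReal (a k) * McW (W k) (f k) (Tmap (e k) y) ≤ McW Wt ft y := by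
    intro k y hy
    rw [McW, ENNReal.mul_iSup]
    refine iSup_le fun n => ?_
    rw [ENNReal.mul_iSup]
    refine iSup_le fun j => ?_
    rw [ENNReal.mul_iSup]
    refine iSup_le fun hcond => ?_
    rw [ENNReal.mul_iSup]
    refine iSup_le fun φ => ?_
    rw [ENNReal.mul_iSup]
    refine iSup_le fun hφ => ?_
    have hpre : Tmap (e k) ⁻¹' dyad n j = dyad (n + e k) (j + 2 ^ n) :=
      Tmap_preimage_dyad _ _ _
    have hsub : dyad (n + e k) (j + 2 ^ n) ⊆ J k := by
      rw [← hpre, ← hJpre k]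
      exact preimage_mono (dyad_subset_I0 hcond.1)
    have hymem : y ∈ dyad (n + e k) (j + 2 ^ n) := by
      rw [← hpre]
      exact hcond.2
    have hjlt : j + 2 ^ n < 2 ^ (n + e k) := by
      have h1 : 2 ^ (n + 1) ≤ 2 ^ (n + e k) :=
        Nat.pow_le_pow_right (by norm_num) (by have := he1 k; omega)
      have h2 : 2 ^ (n + 1) = 2 ^ n + 2 ^ n := by rw [pow_succ]; omega
      have h3 := hcond.1
      omega
    have hφ' : Adm (dyad (n + e k) (j + 2 ^ n)) (fun z => φ (Tmap (e k) z)) := by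
      refine ⟨hφ.1.comp (Tmap_measurable _), fun z hz => ?_⟩
      rw [← hpre] at hz
      exact hφ.2 _ hz
    have hval_avgMat : avgMat (dyad (n + e k) (j + 2 ^ n)) Wt = avgMat (dyad n j) (W k) := by
      ext i i'
      show avgOn _ (fun z => Wt z i i') = avgOn _ (fun x => W k x i i')
      rw [avgOn_congr (measurableSet_dyad _ _)
        (g' := fun z => W k (Tmap (e k) z) i i') (fun z hz => by rw [hWtJ k z (hsub hz)]),
        ← hpre]
      exact avgOn_Tmap (e k) n j (fun t => W k t i i')
    have hval_avg : avgPhiWf (dyad (n + e k) (j + 2 ^ n)) (fun z => φ (Tmap (e k) z)) Wt ft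
        = a k • avgPhiWf (dyad n j) φ (W k) (f k) := by
      rw [avgPhiWf, avgPhiWf]
      rw [avgOn_congr (measurableSet_dyad _ _)
        (g' := fun z => a k • (φ (Tmap (e k) z) • (W k (Tmap (e k) z) *ᵥ f k (Tmap (e k) z))))
        (fun z hz => by
          rw [hWtJ k z (hsub hz), hftJ k z (hsub hz), Matrix.mulVec_smul, smul_comm]),
        ← hpre, avgOn_smul]
      congr 1
      exact avgOn_Tmap (e k) n j (fun t => φ t • (W k t *ᵥ f k t))
    calc ENNReal.ofReal (a k) * ENNReal.ofReal (enorm2 (matSqrt (W k (Tmap (e k) y)) *ᵥ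
            ((avgMat (dyad n j) (W k))⁻¹ *ᵥ avgPhiWf (dyad n j) φ (W k) (f k))))
        = ENNReal.ofReal (enorm2 (matSqrt (Wt y) *ᵥ
            ((avgMat (dyad (n + e k) (j + 2 ^ n)) Wt)⁻¹ *ᵥ
              avgPhiWf (dyad (n + e k) (j + 2 ^ n)) (fun z => φ (Tmap (e k) z)) Wt ft))) := by
          rw [hval_avgMat, hval_avg, Matrix.mulVec_smul, Matrix.mulVec_smul,
            enorm2_smul (ha0 k), ENNReal.ofReal_mul (ha0 k), hWtJ k y hy]
      _ ≤ McW Wt ft y := le_McW Wt ft y _ _ ⟨hjlt, hymem⟩ _ hφ'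
  -- conclusion: the maximal function has infinite  L² norm
  refine ⟨Wt, ft, ⟨hintOn, hsymm, hposW⟩, ⟨hftMeas, hqtInt⟩, hl2, ?_⟩
  have hlower : ∀ k : ℕ, ENNReal.ofReal ((2:ℝ) ^ (k + 1)) ≤ ∫⁻ x in I0, McW Wt ft x ^ 2 := by
    intro k
    have h1 : ∫⁻ y in J k, (McW Wt ft y) ^ 2 ≤ ∫⁻ x in I0, McW Wt ft x ^ 2 :=
      lintegral_mono' (Measure.restrict_mono (hJI0 k) le_rfl) le_rfl
    refine le_trans ?_ h1
    have h2 : ∫⁻ y in J k, (ENNReal.ofReal (a k) * McW (W k) (f k) (Tmap (e k) y)) ^ 2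
        ≤ ∫⁻ y in J k, (McW Wt ft y) ^ 2 := by
      refine lintegral_mono_ae ?_
      refine (ae_restrict_iff' (hJmeas k)).2 (ae_of_all _ fun y hy => ?_)
      exact pow_le_pow_left₀ (zero_le) (hMcomp k y hy) 2
    refine le_trans ?_ h2
    have h3 : ∀ y : ℝ, (ENNReal.ofReal (a k) * McW (W k) (f k) (Tmap (e k) y)) ^ 2
        = ENNReal.ofReal (a k) ^ 2 * (McW (W k) (f k) (Tmap (e k) y)) ^ 2 :=
      fun y => mul_pow _ _ 2
    simp_rw [h3]
    refine le_trans ?_ (lintegral_const_mul_le _ _)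
    rw [hblockL k (fun x => (McW (W k) (f k) x) ^ 2)]
    have h4 : ENNReal.ofReal ((4:ℝ) ^ (k + 1) * N k) ≤ ∫⁻ x in I0, McW (W k) (f k) x ^ 2 :=
      (hbig k).le
    calc ENNReal.ofReal ((2:ℝ) ^ (k + 1))
        = ENNReal.ofReal (a k) ^ 2 *
            (ENNReal.ofReal ((2 ^ e k : ℝ)⁻¹) * ENNReal.ofReal ((4:ℝ) ^ (k + 1) * N k)) := by
          rw [← ENNReal.ofReal_pow (ha0 k), ← ENNReal.ofReal_mul (by positivity),
            ← ENNReal.ofReal_mul (by positivity)]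
          congr 1
          rw [hasq k]
          have hNk := hN k
          have h2e : (0:ℝ) < 2 ^ e k := by positivity
          have h4eq : (4:ℝ) ^ (k + 1) = 2 ^ (k + 1) * 2 ^ (k + 1) := by
            rw [← mul_pow]; norm_num
          field_simp
          rw [h4eq]
          ring
      _ ≤ _ := by gcongr
  by_contra hne
  obtain ⟨n, hn⟩ := ENNReal.exists_nat_gt hne
  have hle := hlower n
  have hcast : (n : ℝ≥0∞) ≤ ENNReal.ofReal ((2:ℝ) ^ (n + 1)) := by
    rw [show ((2:ℝ) ^ (n + 1)) = ((2 ^ (n + 1) : ℕ) : ℝ) by push_cast; ring,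
      ENNReal.ofReal_natCast]
    exact_mod_cast le_trans (Nat.lt_two_pow_self (n := n)).le (Nat.pow_le_pow_right (by norm_num) (by omega))
  exact absurd (le_trans hcast hle) (not_le.2 hn)
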